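/- Let b_n = Σ_{k=0}^n C(n,k)^2·C(n+k,k) be the Apéry numbers of the second kind and α an integer. Define v_n(α) = Σ_{k=0}^n C(n,k)·(-α)^{n-k}·b_k and let M = gcd(v_1(α), v_2(α), v_3(α)) (a non-negative integer). Then for all integers n ≥ 0, b_n ≡ α^n modulo the largest square-free divisor of M (interpreted as 1 if M = 0), i.e. modulo the radical of M. -/

import Mathlib

/-- The Apéry numbers of the second kind `bₙ = ∑ₖ C(n,k)² C(n+k,k)`. -/
def aperyB (n : ℕ) : ℤ :=
  ∑ k ∈ Finset.range (n + 1), (n.choose k : ℤ) ^ 2 * ((n + k).choose k : ℤ)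

/-- The binomial transform of an integer sequence `u` at `α`. -/
def binomialTransform (u : ℕ → ℤ) (α : ℤ) (n : ℕ) : ℤ :=
  ∑ k ∈ Finset.range (n + 1), (n.choose k : ℤ) * (-α) ^ (n - k) * u k

/-- The radical (largest square-free divisor) of a natural number:
the product of its distinct prime factors; the radical of `0` is `1`. -/
def natRadical (M : ℕ) : ℕ := ∏ p ∈ M.primeFactors, p

/-- Lucas's theorem, phrased in `ZMod p`. -/
lemma lucasZMod (p : ℕ) [Fact p.Prime] (n k : ℕ) :
    ((n.choose k : ZMod p)) =
      ((n % p).choose (k % p) : ZMod p) * ((n / p).choose (k / p) : ZMod p) := by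
  have := Choose.choose_modEq_choose_mod_mul_choose_div (p := p) (n := n) (k := k)
  rw [← ZMod.intCast_eq_intCast_iff] at this
  exact_mod_cast this

/-- The Apéry sum can be extended to any larger range. -/
lemma aperyB_eq_sum_range {n N : ℕ} (h : n + 1 ≤ N) :
    aperyB n = ∑ k ∈ Finset.range N, (n.choose k : ℤ) ^ 2 * ((n + k).choose k : ℤ) := by
  rw [aperyB]
  apply Finset.sum_subset (Finset.range_subset_range.2 h)
  intro k _ hk
  simp only [Finset.mem_range, not_lt] at hk
  rw [Nat.choose_eq_zero_of_lt (by omega)]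
  norm_num

/-- Termwise Lucas congruence for the Apéry summand. -/
lemma apery_term_eq (p : ℕ) [Fact p.Prime] (m r j s : ℕ) (hr : r < p) (hs : s < p) :
    (((p * m + r).choose (p * j + s) : ZMod p)) ^ 2
        * (((p * m + r) + (p * j + s)).choose (p * j + s) : ZMod p)
      = ((m.choose j : ZMod p) ^ 2 * ((m + j).choose j : ZMod p))
        * ((r.choose s : ZMod p) ^ 2 * ((r + s).choose s : ZMod p)) := by
  have hp : 0 < p := (Fact.out : p.Prime).pos
  have e1 : (p * m + r) % p = r := by
    rw [Nat.mul_add_mod, Nat.mod_eq_of_lt hr]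
  have e2 : (p * m + r) / p = m := by
    rw [Nat.mul_add_div hp, Nat.div_eq_of_lt hr, Nat.add_zero]
  have e3 : (p * j + s) % p = s := by
    rw [Nat.mul_add_mod, Nat.mod_eq_of_lt hs]
  have e4 : (p * j + s) / p = j := by
    rw [Nat.mul_add_div hp, Nat.div_eq_of_lt hs, Nat.add_zero]
  have esum : (p * m + r) + (p * j + s) = p * (m + j) + (r + s) := by ring
  rcases lt_or_ge (r + s) p with h | h
  · have f1 : ((p * m + r) + (p * j + s)) % p = r + s := by
      rw [esum, Nat.mul_add_mod, Nat.mod_eq_of_lt h]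
    have f2 : ((p * m + r) + (p * j + s)) / p = m + j := by
      rw [esum, Nat.mul_add_div hp, Nat.div_eq_of_lt h, Nat.add_zero]
    rw [lucasZMod p (p * m + r) (p * j + s), lucasZMod p ((p * m + r) + (p * j + s)) (p * j + s),
      e1, e2, e3, e4, f1, f2]
    ring
  · -- both sides vanish
    have hrs : r + s = p + (r + s - p) := by omega
    have g1 : (r + s) % p = r + s - p := by
      rw [Nat.mod_eq_sub_mod h, Nat.mod_eq_of_lt (by omega)]
    have g2 : (r + s) / p = 1 := by
      rw [Nat.div_eq_sub_div hp h, Nat.div_eq_of_lt (by omega)]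
    have f1 : ((p * m + r) + (p * j + s)) % p = r + s - p := by
      rw [esum, Nat.mul_add_mod, g1]
    have f2 : ((p * m + r) + (p * j + s)) / p = m + j + 1 := by
      rw [esum, Nat.mul_add_div hp, g2]
    have hz1 : (((p * m + r) + (p * j + s)).choose (p * j + s) : ZMod p) = 0 := by
      rw [lucasZMod p _ (p * j + s), f1, e3, Nat.choose_eq_zero_of_lt (by omega)]
      simp
    have hz2 : (((r + s).choose s : ZMod p)) = 0 := by
      rw [lucasZMod p (r + s) s, g1, Nat.mod_eq_of_lt hs, Nat.choose_eq_zero_of_lt (by omega)]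
      simp
    rw [hz1, hz2]
    ring

/-- The Lucas congruence for the Apéry numbers of the second kind. -/
lemma aperyB_lucas (p : ℕ) [Fact p.Prime] (m r : ℕ) (hr : r < p) :
    ((aperyB (p * m + r) : ZMod p)) = (aperyB m : ZMod p) * (aperyB r : ZMod p) := by
  have hp : 0 < p := (Fact.out : p.Prime).pos
  have hN : (p * m + r) + 1 ≤ p * (m + 1) := by
    have hpm : p * (m + 1) = p * m + p := by ring
    omega
  have hbig : (aperyB (p * m + r) : ZMod p)
      = ∑ k ∈ Finset.range (p * (m + 1)),
          (((p * m + r).choose k : ZMod p)) ^ 2 * (((p * m + r) + k).choose k : ZMod p) := by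
    rw [aperyB_eq_sum_range hN]
    push_cast
    rfl
  have hreindex : ∑ k ∈ Finset.range (p * (m + 1)),
        (((p * m + r).choose k : ZMod p)) ^ 2 * (((p * m + r) + k).choose k : ZMod p)
      = ∑ x ∈ Finset.range (m + 1) ×ˢ Finset.range p,
        (((p * m + r).choose (p * x.1 + x.2) : ZMod p)) ^ 2
          * (((p * m + r) + (p * x.1 + x.2)).choose (p * x.1 + x.2) : ZMod p) := by
    refine Finset.sum_nbij' (i := fun k => (k / p, k % p)) (j := fun x => p * x.1 + x.2)
      ?_ ?_ ?_ ?_ ?_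
    · intro k hk
      simp only [Finset.mem_range] at hk
      simp only [Finset.mem_product, Finset.mem_range]
      exact ⟨Nat.div_lt_of_lt_mul hk, Nat.mod_lt _ hp⟩
    · intro x hx
      simp only [Finset.mem_product, Finset.mem_range] at hx
      simp only [Finset.mem_range]
      calc p * x.1 + x.2 < p * x.1 + p := by omega
        _ = p * (x.1 + 1) := by ring
        _ ≤ p * (m + 1) := Nat.mul_le_mul_left p hx.1
    · intro k _
      exact Nat.div_add_mod k p
    · intro x hx
      simp only [Finset.mem_product, Finset.mem_range] at hx
      have h1 : (p * x.1 + x.2) / p = x.1 := by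
        rw [Nat.mul_add_div hp, Nat.div_eq_of_lt hx.2, Nat.add_zero]
      have h2 : (p * x.1 + x.2) % p = x.2 := by
        rw [Nat.mul_add_mod, Nat.mod_eq_of_lt hx.2]
      simp only [h1, h2]
    · intro k _
      simp only []
      rw [Nat.div_add_mod k p]
  rw [hbig, hreindex]
  have hm : ((aperyB m : ℤ) : ZMod p)
      = ∑ j ∈ Finset.range (m + 1), (m.choose j : ZMod p) ^ 2 * ((m + j).choose j : ZMod p) := by
    rw [aperyB]
    push_cast
    rfl
  have hrsum : ((aperyB r : ℤ) : ZMod p)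
      = ∑ s ∈ Finset.range p, (r.choose s : ZMod p) ^ 2 * ((r + s).choose s : ZMod p) := by
    rw [aperyB_eq_sum_range (show r + 1 ≤ p from hr)]
    push_cast
    rfl
  have hterm : ∀ x ∈ Finset.range (m + 1) ×ˢ Finset.range p,
      (((p * m + r).choose (p * x.1 + x.2) : ZMod p)) ^ 2
          * (((p * m + r) + (p * x.1 + x.2)).choose (p * x.1 + x.2) : ZMod p)
        = ((m.choose x.1 : ZMod p) ^ 2 * ((m + x.1).choose x.1 : ZMod p))
          * ((r.choose x.2 : ZMod p) ^ 2 * ((r + x.2).choose x.2 : ZMod p)) := by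
    intro x hx
    simp only [Finset.mem_product, Finset.mem_range] at hx
    exact apery_term_eq p m r x.1 x.2 hr hx.2
  rw [hm, hrsum, Finset.sum_mul_sum, ← Finset.sum_product']
  exact Finset.sum_congr rfl hterm

/-- If `bᵣ ≡ αʳ (mod p)` for all `r < p`, then `bₙ ≡ αⁿ (mod p)` for all `n`. -/
lemma aperyB_pow_of_base (p : ℕ) [hp : Fact p.Prime] (α : ℤ)
    (h : ∀ r, r < p → ((aperyB r : ℤ) : ZMod p) = (α : ZMod p) ^ r) :
    ∀ n, ((aperyB n : ℤ) : ZMod p) = (α : ZMod p) ^ n := by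
  intro n
  induction n using Nat.strong_induction_on with
  | _ n ih =>
    rcases lt_or_ge n p with hn | hn
    · exact h n hn
    · have hp1 : 1 < p := hp.out.one_lt
      obtain ⟨q, r, hrp, rfl⟩ : ∃ q r, r < p ∧ n = p * q + r :=
        ⟨n / p, n % p, Nat.mod_lt _ (by omega), (Nat.div_add_mod n p).symm⟩
      have hq : q ≠ 0 := by
        rintro rfl
        omega
      have hqlt : q < p * q + r := by
        have h2 : 2 * q ≤ p * q := Nat.mul_le_mul_right q hp1
        omega
      rw [aperyB_lucas p q r hrp, ih q hqlt, h r hrp, pow_add, pow_mul, ZMod.pow_card]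

lemma aperyB_vals : aperyB 0 = 1 ∧ aperyB 1 = 3 ∧ aperyB 2 = 19 ∧ aperyB 3 = 147 ∧
    aperyB 4 = 1251 := by
  refine ⟨by decide, by decide, by decide, by decide, by decide⟩

/-- If `p` is prime and `α ≡ 3 (mod p)`, with small base checks, then `bₙ ≡ αⁿ (mod p)`. -/
lemma key_dvd (p : ℕ) [hp : Fact p.Prime] (α : ℤ) (n : ℕ)
    (h3 : (p : ℤ) ∣ 3 - α) (hp25 : p = 2 ∨ p = 5) :
    (p : ℤ) ∣ α ^ n - aperyB n := by
  obtain ⟨e0, e1, e2, e3, e4⟩ := aperyB_vals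
  have hα : ((α : ZMod p)) = 3 := by
    have := (ZMod.intCast_zmod_eq_zero_iff_dvd (3 - α) p).2 h3
    push_cast at this
    linear_combination -this
  have hα3 : α ≡ 3 [ZMOD (p : ℤ)] := by
    rw [Int.modEq_iff_dvd]
    exact h3
  have hbase : ∀ r, r < p → ((aperyB r : ℤ) : ZMod p) = (α : ZMod p) ^ r := by
    intro r hr
    have hcast : ((α ^ r : ℤ) : ZMod p) = (α : ZMod p) ^ r := by push_cast; rfl
    rw [← hcast, ZMod.intCast_eq_intCast_iff]
    have hstep : aperyB r ≡ 3 ^ r [ZMOD (p : ℤ)] := by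
      rcases hp25 with rfl | rfl
      · interval_cases r
        · rw [e0]; decide
        · rw [e1]; decide
      · interval_cases r
        · rw [e0]; decide
        · rw [e1]; decide
        · rw [e2]; decide
        · rw [e3]; decide
        · rw [e4]; decide
    exact hstep.trans (hα3.pow r).symm
  rw [← ZMod.intCast_zmod_eq_zero_iff_dvd]
  push_cast
  rw [sub_eq_zero]
  rw [aperyB_pow_of_base p α hbase n]

/-- With `M = gcd(v₁(α), v₂(α), v₃(α))` for the binomial transform `v` of the
Apéry numbers of the second kind, we have `bₙ ≡ αⁿ` modulo the radical of `M`
for all `n ≥ 0`. -/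
theorem aperyB_modEq_radical (α : ℤ) :
    ∀ n : ℕ, aperyB n ≡ α ^ n
      [ZMOD (natRadical (Int.gcd (binomialTransform aperyB α 1)
        (Int.gcd (binomialTransform aperyB α 2) (binomialTransform aperyB α 3))) : ℤ)] := by
  obtain ⟨e0, e1, e2, e3, e4⟩ := aperyB_vals
  have hv1 : binomialTransform aperyB α 1 = 3 - α := by
    rw [binomialTransform]
    simp [Finset.sum_range_succ, e0, e1]
    ring
  have hv2 : binomialTransform aperyB α 2 = α ^ 2 - 6 * α + 19 := by
    rw [binomialTransform]
    simp [Finset.sum_range_succ, e0, e1, e2]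
    ring
  intro n
  set M : ℕ := Int.gcd (binomialTransform aperyB α 1)
      (Int.gcd (binomialTransform aperyB α 2) (binomialTransform aperyB α 3)) with hM
  rw [Int.modEq_iff_dvd]
  rw [natRadical, Int.natCast_dvd]
  apply Finset.prod_primes_dvd
  · intro p hpf
    exact (Nat.prime_of_mem_primeFactors hpf).prime
  · intro p hpf
    have hp : p.Prime := Nat.prime_of_mem_primeFactors hpf
    have hpM : p ∣ M := Nat.dvd_of_mem_primeFactors hpf
    haveI : Fact p.Prime := ⟨hp⟩
    have hMd1 : (p : ℤ) ∣ binomialTransform aperyB α 1 := by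
      have h1 : ((M : ℕ) : ℤ) ∣ binomialTransform aperyB α 1 := by
        rw [hM]; exact Int.gcd_dvd_left _ _
      exact dvd_trans (Int.natCast_dvd_natCast.2 hpM) h1
    have hMd2 : (p : ℤ) ∣ binomialTransform aperyB α 2 := by
      have h1 : ((M : ℕ) : ℤ) ∣ binomialTransform aperyB α 2 := by
        rw [hM]; exact dvd_trans (Int.gcd_dvd_right _ _) (Int.gcd_dvd_left _ _)
      exact dvd_trans (Int.natCast_dvd_natCast.2 hpM) h1
    rw [hv1] at hMd1
    rw [hv2] at hMd2
    have h10 : (p : ℤ) ∣ 10 := by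
      have hsq : (p : ℤ) ∣ (3 - α) ^ 2 := dvd_pow hMd1 two_ne_zero
      have := dvd_sub hMd2 hsq
      have heq : α ^ 2 - 6 * α + 19 - (3 - α) ^ 2 = 10 := by ring
      rwa [heq] at this
    have h10n : p ∣ 10 := by exact_mod_cast h10
    have hp25 : p = 2 ∨ p = 5 := by
      have h2 := hp.two_le
      have hle : p ≤ 10 := Nat.le_of_dvd (by norm_num) h10n
      interval_cases p <;> revert h10n <;> revert hp <;> decide
    rw [← Int.natCast_dvd]
    exact key_dvd p α n hMd1 hp25
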